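/- arXiv:1411.4022 — 2 statements merged into one kernel-verified Lean document; each statement's English description precedes it below -/
import Mathlib

section
/- Let n ≥ 1. For every X in the free abelian group ℤ[J(n)], the function ρ(X) is a generalized rank invariant, and the map X ↦ ρ(X) is a bijection from ℤ[J(n)] onto the set of generalized rank invariants. -/
open scoped Classical

/-- `J(n) = {(x, y) ∈ ℤ^n × ℤ^n : x ≤ y componentwise}`. -/
def Jn (n : ℕ) := {xy : (Fin n → ℤ) × (Fin n → ℤ) // ∀ j, xy.1 j ≤ xy.2 j}

/-- The generalized rank invariant associated to an element `X` of the free abelian group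
`ℤ[J(n)]`: `ρ(X)(u, v) = Σ_{(x,y)} X(x,y) · [x ≤ u ∧ u ≤ v ∧ v ≤ y]`. -/
noncomputable def rho (n : ℕ) (X : Jn n →₀ ℤ) (u v : Fin n → ℤ) : ℤ :=
  X.sum (fun xy c => c *
    (if (∀ j, xy.1.1 j ≤ u j) ∧ (∀ j, u j ≤ v j) ∧ (∀ j, v j ≤ xy.1.2 j) then 1 else 0))

/-- The indicator `[x ≤ u ≤ v ≤ y]`. -/
noncomputable def ind (n : ℕ) (p : Jn n) (u v : Fin n → ℤ) : ℤ :=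
  if (∀ j, p.1.1 j ≤ u j) ∧ (∀ j, u j ≤ v j) ∧ (∀ j, v j ≤ p.1.2 j) then 1 else 0

lemma rho_eq_sum (n : ℕ) (X : Jn n →₀ ℤ) (u v : Fin n → ℤ) :
    rho n X u v = ∑ p ∈ X.support, X p * ind n p u v := rfl

lemma rho_zero (n : ℕ) (u v : Fin n → ℤ) : rho n 0 u v = 0 := by
  simp [rho]

lemma rho_single (n : ℕ) (p : Jn n) (c : ℤ) (u v : Fin n → ℤ) :
    rho n (Finsupp.single p c) u v = c * ind n p u v := by
  unfold rho
  rw [Finsupp.sum_single_index]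
  · rfl
  · simp

lemma rho_sub (n : ℕ) (X Y : Jn n →₀ ℤ) (u v : Fin n → ℤ) :
    rho n (X - Y) u v = rho n X u v - rho n Y u v := by
  unfold rho
  exact Finsupp.sum_sub_index (fun a b₁ b₂ => sub_mul _ _ _)

lemma rho_add (n : ℕ) (X Y : Jn n →₀ ℤ) (u v : Fin n → ℤ) :
    rho n (X + Y) u v = rho n X u v + rho n Y u v := by
  unfold rho
  exact Finsupp.sum_add_index' (fun a => by simp) (fun a b₁ b₂ => add_mul _ _ _)

lemma ind_ne_zero {n : ℕ} {p : Jn n} {u v : Fin n → ℤ} (h : ind n p u v ≠ 0) :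
    (∀ j, p.1.1 j ≤ u j) ∧ (∀ j, u j ≤ v j) ∧ (∀ j, v j ≤ p.1.2 j) := by
  by_contra hc
  exact h (if_neg hc)

lemma ind_self (n : ℕ) (p : Jn n) : ind n p p.1.1 p.1.2 = 1 :=
  if_pos ⟨fun j => le_refl _, p.2, fun j => le_refl _⟩

/-- The downward closure (under interval containment) of the support of `r`. -/
def DC (n : ℕ) (r : (Fin n → ℤ) → (Fin n → ℤ) → ℤ) : Set ((Fin n → ℤ) × (Fin n → ℤ)) :=
  {uv | ∃ ab : (Fin n → ℤ) × (Fin n → ℤ), r ab.1 ab.2 ≠ 0 ∧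
    (∀ j, ab.1 j ≤ uv.1 j) ∧ (∀ j, uv.1 j ≤ uv.2 j) ∧ (∀ j, uv.2 j ≤ ab.2 j)}

lemma DC_finite (n : ℕ) (r : (Fin n → ℤ) → (Fin n → ℤ) → ℤ)
    (h1 : ∀ u v, ¬(∀ j, u j ≤ v j) → r u v = 0) (u₀ v₀ : Fin n → ℤ)
    (h2 : ∀ u v, ¬((∀ j, u₀ j ≤ u j) ∧ (∀ j, v j ≤ v₀ j)) → r u v = 0) :
    (DC n r).Finite := by
  apply Set.Finite.subset ((Set.finite_Icc u₀ v₀).prod (Set.finite_Icc u₀ v₀))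
  rintro ⟨u, v⟩ ⟨ab, hab, hau, huv, hvb⟩
  have h12 : ∀ j, ab.1 j ≤ ab.2 j := by
    by_contra h; exact hab (h1 _ _ h)
  have hbd : (∀ j, u₀ j ≤ ab.1 j) ∧ (∀ j, ab.2 j ≤ v₀ j) := by
    by_contra h; exact hab (h2 _ _ h)
  constructor
  · exact ⟨fun j => le_trans (hbd.1 j) (hau j),
      fun j => le_trans (huv j) (le_trans (hvb j) (hbd.2 j))⟩
  · exact ⟨fun j => le_trans (hbd.1 j) (le_trans (hau j) (huv j)),
      fun j => le_trans (hvb j) (hbd.2 j)⟩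

lemma surj_aux (n : ℕ) : ∀ (k : ℕ) (r : (Fin n → ℤ) → (Fin n → ℤ) → ℤ),
    (∀ u v, ¬(∀ j, u j ≤ v j) → r u v = 0) →
    ∀ (u₀ v₀ : Fin n → ℤ),
    (∀ u v, ¬((∀ j, u₀ j ≤ u j) ∧ (∀ j, v j ≤ v₀ j)) → r u v = 0) →
    (DC n r).ncard ≤ k → ∃ X : Jn n →₀ ℤ, ∀ u v, rho n X u v = r u v := by
  intro k
  induction k with
  | zero =>
    intro r h1 u₀ v₀ h2 hcard
    have hfin := DC_finite n r h1 u₀ v₀ h2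
    have hempty : DC n r = ∅ := (Set.ncard_eq_zero hfin).mp (Nat.le_zero.mp hcard)
    refine ⟨0, fun u v => ?_⟩
    rw [rho_zero]
    by_contra h
    have huv : ∀ j, u j ≤ v j := by
      by_contra hc; exact h (h1 _ _ hc).symm
    have : (u, v) ∈ DC n r :=
      ⟨(u, v), fun hz => h hz.symm, fun j => le_refl _, huv, fun j => le_refl _⟩
    rw [hempty] at this; exact this
  | succ k ih =>
    intro r h1 u₀ v₀ h2 hcard
    by_cases hr0 : ∀ u v, r u v = 0
    · exact ⟨0, fun u v => by rw [rho_zero, hr0]⟩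
    push_neg at hr0
    have hfin := DC_finite n r h1 u₀ v₀ h2
    -- the support of r, as a finite set
    have hSfin : {p : (Fin n → ℤ) × (Fin n → ℤ) | r p.1 p.2 ≠ 0}.Finite := by
      apply hfin.subset
      rintro ⟨a, b⟩ hp
      have hab : ∀ j, a j ≤ b j := by
        by_contra h; exact hp (h1 _ _ h)
      exact ⟨(a, b), hp, fun j => le_refl _, hab, fun j => le_refl _⟩
    have hSne : hSfin.toFinset.Nonempty := by
      obtain ⟨u, v, huv⟩ := hr0
      exact ⟨(u, v), by simpa using huv⟩
    obtain ⟨p, hpF, hmax⟩ := hSfin.toFinset.exists_max_image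
      (fun p => ∑ j, (p.2 j - p.1 j)) hSne
    have hrxy : r p.1 p.2 ≠ 0 := by simpa using hpF
    have hxy : ∀ j, p.1 j ≤ p.2 j := by
      by_contra h; exact hrxy (h1 _ _ h)
    set x := p.1 with hx
    set y := p.2 with hy
    set c := r x y with hc
    set P : Jn n := ⟨(x, y), hxy⟩ with hP
    -- maximality: any support element containing [x,y] equals (x,y)
    have hkey : ∀ a b : Fin n → ℤ, r a b ≠ 0 → (∀ j, a j ≤ x j) → (∀ j, y j ≤ b j) →
        a = x ∧ b = y := by
      intro a b hab hax hyb
      have hmem : (a, b) ∈ hSfin.toFinset := by simpa using hab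
      have hsum : ∑ j, (b j - a j) ≤ ∑ j, (y j - x j) := hmax (a, b) hmem
      have hle : ∀ j, y j - x j ≤ b j - a j := fun j => sub_le_sub (hyb j) (hax j)
      by_contra hne
      have hstrict : ∃ j, y j - x j < b j - a j := by
        by_cases ha : a = x
        · have hb : b ≠ y := fun hb => hne ⟨ha, hb⟩
          obtain ⟨j, hj⟩ := Function.ne_iff.mp hb
          refine ⟨j, ?_⟩
          have hb1 : y j < b j := lt_of_le_of_ne (hyb j) (Ne.symm hj)
          have hb2 : a j = x j := congrFun ha j
          omega
        · obtain ⟨j, hj⟩ := Function.ne_iff.mp ha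
          refine ⟨j, ?_⟩
          have hb1 : a j < x j := lt_of_le_of_ne (hax j) hj
          have hb2 := hyb j
          omega
      obtain ⟨j, hj⟩ := hstrict
      have : ∑ j, (y j - x j) < ∑ j, (b j - a j) :=
        Finset.sum_lt_sum (fun i _ => hle i) ⟨j, Finset.mem_univ j, hj⟩
      omega
    set r' : (Fin n → ℤ) → (Fin n → ℤ) → ℤ :=
      fun u v => r u v - c * ind n P u v with hr'
    have h1' : ∀ u v, ¬(∀ j, u j ≤ v j) → r' u v = 0 := by
      intro u v h
      have : ind n P u v = 0 := if_neg (fun hc => h hc.2.1)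
      simp [hr', this, h1 u v h]
    have h2' : ∀ u v, ¬((∀ j, u₀ j ≤ u j) ∧ (∀ j, v j ≤ v₀ j)) → r' u v = 0 := by
      intro u v h
      have hbd : (∀ j, u₀ j ≤ x j) ∧ (∀ j, y j ≤ v₀ j) := by
        by_contra hcn; exact hrxy (h2 _ _ hcn)
      have hind : ind n P u v = 0 := by
        apply if_neg
        rintro ⟨hxu, huv, hvy⟩
        exact h ⟨fun j => le_trans (hbd.1 j) (hxu j), fun j => le_trans (hvy j) (hbd.2 j)⟩
      simp [hr', hind, h2 u v h]
    have hDCsub : DC n r' ⊆ DC n r \ {(x, y)} := by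
      rintro ⟨u, v⟩ ⟨ab, hab, h₁, h₂, h₃⟩
      constructor
      · by_cases hab' : r ab.1 ab.2 ≠ 0
        · exact ⟨ab, hab', h₁, h₂, h₃⟩
        · push_neg at hab'
          have hind : ind n P ab.1 ab.2 ≠ 0 := by
            intro hz; apply hab; simp [hr', hab', hz]
          obtain ⟨hxa, hab12, hby⟩ := ind_ne_zero hind
          exact ⟨(x, y), hrxy, fun j => le_trans (hxa j) (h₁ j), h₂,
            fun j => le_trans (h₃ j) (hby j)⟩
      · intro hmem
        have huvxy : (u, v) = (x, y) := hmem
        have hux : u = x := (Prod.ext_iff.mp huvxy).1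
        have hvy : v = y := (Prod.ext_iff.mp huvxy).2
        subst hux; subst hvy
        by_cases hab' : r ab.1 ab.2 ≠ 0
        · obtain ⟨hax, hby⟩ := hkey ab.1 ab.2 hab' h₁ h₃
          have : ab = (x, y) := Prod.ext hax hby
          rw [this] at hab
          apply hab
          simp [hr', (show ind n P x y = 1 from ind_self n P), hc]
        · push_neg at hab'
          have hind : ind n P ab.1 ab.2 ≠ 0 := by
            intro hz; apply hab; simp [hr', hab', hz]
          obtain ⟨hxa, hab12, hby⟩ := ind_ne_zero hind
          have hax : ab.1 = x := funext fun j => le_antisymm (h₁ j) (hxa j)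
          have hbyy : ab.2 = y := funext fun j => le_antisymm (hby j) (h₃ j)
          rw [hax, hbyy] at hab'
          exact hrxy hab'
    have hmemDC : (x, y) ∈ DC n r :=
      ⟨(x, y), hrxy, fun j => le_refl _, hxy, fun j => le_refl _⟩
    have hcard' : (DC n r').ncard ≤ k := by
      have h1c : (DC n r').ncard ≤ (DC n r \ {(x, y)}).ncard :=
        Set.ncard_le_ncard hDCsub hfin.diff
      have h2c : (DC n r \ {(x, y)}).ncard < (DC n r).ncard :=
        Set.ncard_diff_singleton_lt_of_mem hmemDC hfin
      omega
    obtain ⟨X', hX'⟩ := ih r' h1' u₀ v₀ h2' hcard'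
    refine ⟨X' + Finsupp.single P c, fun u v => ?_⟩
    rw [rho_add, rho_single, hX']
    simp [hr']

/-- The map `X ↦ ρ(X)` is a bijection from `ℤ[J(n)]` onto the set of
generalized rank invariants: for every `X`, `ρ(X)` is a generalized rank invariant, and
the map is injective and surjective onto that set. -/
theorem stmt15 (n : ℕ) (hn : 1 ≤ n) :
    Set.BijOn (fun X : Jn n →₀ ℤ => rho n X) Set.univ
      {r : (Fin n → ℤ) → (Fin n → ℤ) → ℤ |
        (∀ u v, ¬(∀ j, u j ≤ v j) → r u v = 0) ∧
        ∃ u₀ v₀ : Fin n → ℤ, ∀ u v,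
          ¬((∀ j, u₀ j ≤ u j) ∧ (∀ j, v j ≤ v₀ j)) → r u v = 0} := by
  refine ⟨?_, ?_, ?_⟩
  · -- MapsTo
    intro X _
    constructor
    · intro u v h
      show rho n X u v = 0
      rw [rho_eq_sum]
      apply Finset.sum_eq_zero
      intro p _
      have : ind n p u v = 0 := if_neg (fun hc => h hc.2.1)
      rw [this, mul_zero]
    · by_cases hne : X.support.Nonempty
      · refine ⟨fun j => X.support.inf' hne (fun p => p.1.1 j),
          fun j => X.support.sup' hne (fun p => p.1.2 j), fun u v h => ?_⟩
        show rho n X u v = 0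
        rw [rho_eq_sum]
        apply Finset.sum_eq_zero
        intro p hp
        have hind : ind n p u v = 0 := by
          apply if_neg
          rintro ⟨hxu, huv, hvy⟩
          apply h
          constructor
          · intro j
            exact le_trans (Finset.inf'_le (fun p => p.1.1 j) hp) (hxu j)
          · intro j
            exact le_trans (hvy j) (Finset.le_sup' (fun p => p.1.2 j) hp)
        rw [hind, mul_zero]
      · refine ⟨0, 0, fun u v h => ?_⟩
        show rho n X u v = 0
        rw [rho_eq_sum]
        rw [Finset.not_nonempty_iff_eq_empty.mp hne]
        simp
  · -- InjOn
    intro X _ Y _ h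
    by_contra hne
    set Z := X - Y with hZ
    have hZne : Z ≠ 0 := sub_ne_zero.mpr hne
    have hZ0 : ∀ u v, rho n Z u v = 0 := by
      intro u v
      have hxyv : rho n X u v = rho n Y u v := congrFun (congrFun h u) v
      rw [rho_sub, hxyv, sub_self]
    have hsupp : Z.support.Nonempty := Finsupp.support_nonempty_iff.mpr hZne
    obtain ⟨p, hpS, hmax⟩ := Z.support.exists_max_image
      (fun q => ∑ j, (q.1.2 j - q.1.1 j)) hsupp
    have : rho n Z p.1.1 p.1.2 = Z p := by
      rw [rho_eq_sum]
      rw [Finset.sum_eq_single_of_mem p hpS]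
      · rw [ind_self, mul_one]
      · intro q hq hqp
        by_cases hiq : ind n q p.1.1 p.1.2 = 0
        · rw [hiq, mul_zero]
        · exfalso
          obtain ⟨hqx, hxy, hyq⟩ := ind_ne_zero hiq
          have hle : ∀ j, p.1.2 j - p.1.1 j ≤ q.1.2 j - q.1.1 j :=
            fun j => sub_le_sub (hyq j) (hqx j)
          have hsum : ∑ j, (q.1.2 j - q.1.1 j) ≤ ∑ j, (p.1.2 j - p.1.1 j) := hmax q hq
          have hne1 : q.1 ≠ p.1 := fun hq1 => hqp (Subtype.ext hq1)
          have hstrict : ∃ j, p.1.2 j - p.1.1 j < q.1.2 j - q.1.1 j := by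
            by_cases ha : q.1.1 = p.1.1
            · have hb : q.1.2 ≠ p.1.2 := fun hb => hne1 (Prod.ext ha hb)
              obtain ⟨j, hj⟩ := Function.ne_iff.mp hb
              have h1 : p.1.2 j < q.1.2 j := lt_of_le_of_ne (hyq j) (Ne.symm hj)
              have h2 : q.1.1 j = p.1.1 j := congrFun ha j
              exact ⟨j, by omega⟩
            · obtain ⟨j, hj⟩ := Function.ne_iff.mp ha
              have h1 : q.1.1 j < p.1.1 j := lt_of_le_of_ne (hqx j) hj
              have h2 := hyq j
              exact ⟨j, by omega⟩
          obtain ⟨j, hj⟩ := hstrict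
          have : ∑ j, (p.1.2 j - p.1.1 j) < ∑ j, (q.1.2 j - q.1.1 j) :=
            Finset.sum_lt_sum (fun i _ => hle i) ⟨j, Finset.mem_univ j, hj⟩
          omega
    have hZp : Z p ≠ 0 := Finsupp.mem_support_iff.mp hpS
    rw [hZ0] at this
    exact hZp this.symm
  · -- SurjOn
    rintro r ⟨h1, u₀, v₀, h2⟩
    obtain ⟨X, hX⟩ := surj_aux n (DC n r).ncard r h1 u₀ v₀ h2 le_rfl
    exact ⟨X, Set.mem_univ X, funext fun u => funext fun v => hX u v⟩
end

section
/- Let m, n ≥ 1, let w_1, …, w_m be positive real numbers, and let z_1, …, z_m ∈ ℝ^n have all entries positive (z_i = (z_{i,1}, …, z_{i,n})). Assume the vectors z_1, …, z_m are in decreasing lexicographic order, i.e., z_1 ≥_lex z_2 ≥_lex ⋯ ≥_lex z_m. Then the sequence k ↦ ( Σ_{i=1}^m w_i · ∏_{j=1}^n (z_{i,j}/z_{1,j})^{k^{n+1−j}} )^{1/k} tends to 1 as the natural number k tends to infinity. -/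
open Filter

/-- `u ≤_lex v` on `ℝ^n`: `u = v`, or `u_j < v_j` at the first index `j` where they
differ. -/
def lexLE {n : ℕ} (u v : Fin n → ℝ) : Prop :=
  u = v ∨ ∃ j, (∀ j', j' < j → u j' = v j') ∧ u j < v j

/-- If `a <_lex b` strictly (first difference at `j₀`, where `a j₀ < b j₀`), then
`∏ j, (a j / b j) ^ (k ^ (n - j)) → 0`. -/
lemma prod_tendsto_zero (n : ℕ) (a b : Fin n → ℝ) (ha : ∀ j, 0 < a j) (hb : ∀ j, 0 < b j)
    (j₀ : Fin n) (heq : ∀ j' : Fin n, j' < j₀ → a j' = b j') (hlt : a j₀ < b j₀) :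
    Filter.Tendsto (fun k : ℕ => ∏ j : Fin n, (a j / b j) ^ ((k : ℝ) ^ (n - (j : ℕ))))
      atTop (nhds 0) := by
  set L : Fin n → ℝ := fun j => Real.log (a j / b j) with hL
  have hdivpos : ∀ j, 0 < a j / b j := fun j => div_pos (ha j) (hb j)
  have hL0 : ∀ j' : Fin n, j' < j₀ → L j' = 0 := by
    intro j' hj'
    simp [hL, heq j' hj', div_self (hb j').ne']
  have hc : L j₀ < 0 := Real.log_neg (hdivpos j₀) ((div_lt_one (hb j₀)).2 hlt)
  set c : ℝ := L j₀ with hcdef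
  set M : ℝ := ∑ j : Fin n, |L j| with hM
  set d : ℕ := n - (j₀ : ℕ) - 1 with hd
  have hj₀n : (j₀ : ℕ) < n := j₀.2
  have hd1 : n - (j₀ : ℕ) = d + 1 := by omega
  -- the product equals exp of the log-sum
  have hprod : ∀ k : ℕ,
      (∏ j : Fin n, (a j / b j) ^ ((k : ℝ) ^ (n - (j : ℕ))))
        = Real.exp (∑ j : Fin n, (k : ℝ) ^ (n - (j : ℕ)) * L j) := by
    intro k
    rw [Real.exp_sum]
    refine Finset.prod_congr rfl fun j _ => ?_
    rw [hL, ← Real.log_rpow (hdivpos j), Real.exp_log (Real.rpow_pos_of_pos (hdivpos j) _)]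
  have key : Filter.Tendsto (fun k : ℕ => ∑ j : Fin n, (k : ℝ) ^ (n - (j : ℕ)) * L j)
      atTop atBot := by
    have hg : Filter.Tendsto (fun k : ℕ => (k : ℝ) * c + M) atTop atBot := by
      apply tendsto_atBot_add_const_right
      exact tendsto_natCast_atTop_atTop.atTop_mul_const_of_neg hc
    refine tendsto_atBot_mono' _ ?_ hg
    have h1 : ∀ᶠ k : ℕ in atTop, (1 : ℕ) ≤ k := eventually_ge_atTop 1
    have h2 : ∀ᶠ k : ℕ in atTop, (k : ℝ) * c + M ≤ 0 := hg.eventually (eventually_le_atBot 0)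
    filter_upwards [h1, h2] with k hk1 hk2
    have hk1' : (1 : ℝ) ≤ (k : ℝ) := by exact_mod_cast hk1
    have hkd : (1 : ℝ) ≤ (k : ℝ) ^ d := one_le_pow₀ hk1'
    -- bound the sum
    have hsplit : ∑ j : Fin n, (k : ℝ) ^ (n - (j : ℕ)) * L j
        = (k : ℝ) ^ (n - (j₀ : ℕ)) * c +
          ∑ j ∈ Finset.univ.erase j₀, (k : ℝ) ^ (n - (j : ℕ)) * L j := by
      rw [← Finset.add_sum_erase _ (fun j : Fin n => (k : ℝ) ^ (n - (j : ℕ)) * L j)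
        (Finset.mem_univ j₀)]
    have hrest : ∑ j ∈ Finset.univ.erase j₀, (k : ℝ) ^ (n - (j : ℕ)) * L j
        ≤ (k : ℝ) ^ d * M := by
      calc ∑ j ∈ Finset.univ.erase j₀, (k : ℝ) ^ (n - (j : ℕ)) * L j
          ≤ ∑ j ∈ Finset.univ.erase j₀, (k : ℝ) ^ d * |L j| := by
            refine Finset.sum_le_sum fun j hj => ?_
            rcases lt_or_gt_of_ne (Finset.ne_of_mem_erase hj) with hjlt | hjgt
            · rw [hL0 j hjlt]
              simp [abs_nonneg, mul_nonneg (by positivity : (0:ℝ) ≤ (k:ℝ) ^ d)]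
            · have hle : n - (j : ℕ) ≤ d := by
                have : (j₀ : ℕ) < (j : ℕ) := hjgt
                omega
              calc (k : ℝ) ^ (n - (j : ℕ)) * L j
                  ≤ (k : ℝ) ^ (n - (j : ℕ)) * |L j| :=
                    mul_le_mul_of_nonneg_left (le_abs_self _) (by positivity)
                _ ≤ (k : ℝ) ^ d * |L j| :=
                    mul_le_mul_of_nonneg_right (pow_le_pow_right₀ hk1' hle) (abs_nonneg _)
        _ = (k : ℝ) ^ d * ∑ j ∈ Finset.univ.erase j₀, |L j| := by
            rw [Finset.mul_sum]
        _ ≤ (k : ℝ) ^ d * M := by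
            refine mul_le_mul_of_nonneg_left ?_ (by positivity)
            exact Finset.sum_le_sum_of_subset_of_nonneg (Finset.erase_subset _ _)
              (fun j _ _ => abs_nonneg _)
    have hbound : ∑ j : Fin n, (k : ℝ) ^ (n - (j : ℕ)) * L j
        ≤ (k : ℝ) ^ d * ((k : ℝ) * c + M) := by
      rw [hsplit, hd1, pow_succ, mul_add]
      have : (k : ℝ) ^ d * (k : ℝ) * c = (k : ℝ) ^ d * ((k : ℝ) * c) := by ring
      rw [this]
      exact add_le_add le_rfl hrest
    calc ∑ j : Fin n, (k : ℝ) ^ (n - (j : ℕ)) * L j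
        ≤ (k : ℝ) ^ d * ((k : ℝ) * c + M) := hbound
      _ ≤ 1 * ((k : ℝ) * c + M) := mul_le_mul_of_nonpos_right hkd hk2
      _ = (k : ℝ) * c + M := one_mul _
  have := Real.tendsto_exp_atBot.comp key
  refine this.congr fun k => ?_
  rw [Function.comp_apply, hprod k]

/-- For positive weights `w_i` and vectors `z_i ∈ ℝ^n` with positive entries
arranged in decreasing lexicographic order,
`(Σ_{i=1}^m w_i ∏_{j=1}^n (z_{i,j}/z_{1,j})^{k^{n+1-j}})^{1/k} → 1` as `k → ∞`.
Here `i : Fin m`, `j : Fin n` are 0-based, so `z_1` is `z ⟨0, hm⟩` and the exponent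
`k^{n+1-(j+1)} = k^{n-j}`; powers with real exponents are real powers. -/
theorem stmt17 (m n : ℕ) (hm : 1 ≤ m) (hn : 1 ≤ n)
    (w : Fin m → ℝ) (hw : ∀ i, 0 < w i)
    (z : Fin m → Fin n → ℝ) (hz : ∀ i j, 0 < z i j)
    (hlex : ∀ i i' : Fin m, i ≤ i' → lexLE (z i') (z i)) :
    Tendsto
      (fun k : ℕ =>
        (∑ i : Fin m, w i *
            ∏ j : Fin n, (z i j / z ⟨0, hm⟩ j) ^ ((k : ℝ) ^ (n - (j : ℕ)))) ^ ((k : ℝ)⁻¹))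
      atTop (nhds 1) := by
  set i₀ : Fin m := ⟨0, hm⟩ with hi₀
  set P : Fin m → ℕ → ℝ := fun i k => ∏ j : Fin n, (z i j / z i₀ j) ^ ((k : ℝ) ^ (n - (j : ℕ)))
    with hP
  set S : ℕ → ℝ := fun k => ∑ i : Fin m, w i * P i k with hS
  have hPpos : ∀ i k, 0 < P i k := fun i k =>
    Finset.prod_pos fun j _ => Real.rpow_pos_of_pos (div_pos (hz i j) (hz i₀ j)) _
  have hP0 : ∀ k, P i₀ k = 1 := by
    intro k
    refine Finset.prod_eq_one fun j _ => ?_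
    rw [div_self (hz i₀ j).ne', Real.one_rpow]
  set A : ℝ := w i₀ with hA
  set B : ℝ := ∑ i : Fin m, w i with hB
  have hApos : 0 < A := hw i₀
  have hlow : ∀ k, A ≤ S k := by
    intro k
    have : A = w i₀ * P i₀ k := by rw [hP0 k, mul_one]
    rw [this]
    exact Finset.single_le_sum (fun i _ => le_of_lt (mul_pos (hw i) (hPpos i k)))
      (Finset.mem_univ i₀)
  have hhigh : ∀ᶠ k : ℕ in atTop, S k ≤ B := by
    have hPle : ∀ i : Fin m, ∀ᶠ k : ℕ in atTop, P i k ≤ 1 := by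
      intro i
      have hle : i₀ ≤ i := by
        simp only [hi₀, Fin.le_def]
        exact Nat.zero_le _
      rcases hlex i₀ i hle with heq | ⟨j₀, heqj, hltj⟩
      · refine Filter.Eventually.of_forall fun k => ?_
        have : P i k = 1 := by
          refine Finset.prod_eq_one fun j _ => ?_
          rw [show z i j = z i₀ j from congrFun heq j, div_self (hz i₀ j).ne', Real.one_rpow]
        rw [this]
      · have := prod_tendsto_zero n (z i) (z i₀) (hz i) (hz i₀) j₀ heqj hltj
        exact this.eventually (eventually_le_nhds zero_lt_one)
    have hall : ∀ᶠ k : ℕ in atTop, ∀ i : Fin m, P i k ≤ 1 := eventually_all.2 hPle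
    filter_upwards [hall] with k hk
    calc S k ≤ ∑ i : Fin m, w i * 1 :=
          Finset.sum_le_sum fun i _ => mul_le_mul_of_nonneg_left (hk i) (hw i).le
      _ = B := by simp [hB]
  have hAB : A ≤ B :=
    Finset.single_le_sum (fun i _ => (hw i).le) (Finset.mem_univ i₀)
  have hBpos : 0 < B := hApos.trans_le hAB
  -- squeeze
  have hinv : Tendsto (fun k : ℕ => ((k : ℝ))⁻¹) atTop (nhds 0) :=
    tendsto_inv_atTop_zero.comp tendsto_natCast_atTop_atTop
  have hlim : ∀ c : ℝ, 0 < c → Tendsto (fun k : ℕ => c ^ ((k : ℝ)⁻¹)) atTop (nhds 1) := by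
    intro c hc
    have hcont : ContinuousAt (fun x : ℝ => c ^ x) 0 := Real.continuousAt_const_rpow hc.ne'
    have := hcont.tendsto.comp hinv
    simpa [Real.rpow_zero, Function.comp_def] using this
  refine tendsto_of_tendsto_of_tendsto_of_le_of_le' (hlim A hApos) (hlim B hBpos) ?_ ?_
  · refine Filter.Eventually.of_forall fun k => ?_
    exact Real.rpow_le_rpow hApos.le (hlow k) (by positivity)
  · filter_upwards [hhigh] with k hk
    exact Real.rpow_le_rpow (hApos.le.trans (hlow k)) hk (by positivity)
end
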